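/- Let p > 1 and suppose f = (f_1,…,f_k) is not constant. Then for every λ > 0 the unique minimizer u^λ of G satisfies min_j f_j < u^λ_i < max_j f_j for every i. In particular f itself is never a minimizer. -/

import Mathlib

/-- Predecessor index: `i - 1` (and `0` maps to `0`). -/
def pred {k : ℕ} (i : Fin k) : Fin k :=
  ⟨i.val - 1, Nat.lt_of_le_of_lt (Nat.sub_le _ _) i.isLt⟩

/-- The discrete energy `G(v) = ∑_{i≥2} |v_i - v_{i-1}| + λ ∑_i L_i |f_i - v_i|^p`
(indices written with `Fin k`, i.e. `0,…,k-1`). -/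
noncomputable def G (k : ℕ) (lam p : ℝ) (L f : Fin k → ℝ) (v : Fin k → ℝ) : ℝ :=
  (∑ i : Fin k, if i.val = 0 then 0 else |v i - v (pred i)|) +
    lam * ∑ i : Fin k, L i * |f i - v i| ^ p

open Real Finset

lemma abs_sub_eps_rpow {p x ε : ℝ} (hp : 0 ≤ p) (hx : 0 ≤ x) (hε : 0 ≤ ε) :
    |x - ε| ^ p ≤ x ^ p + ε ^ p := by
  have h1 : |x - ε| ≤ max x ε := by
    rcases le_total ε x with h | h
    · rw [abs_of_nonneg (by linarith)]; exact le_max_of_le_left (by linarith)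
    · rw [abs_of_nonpos (by linarith)]; exact le_max_of_le_right (by linarith)
  calc |x - ε| ^ p ≤ (max x ε) ^ p := rpow_le_rpow (abs_nonneg _) h1 hp
    _ ≤ x ^ p + ε ^ p := by
        rcases max_cases x ε with ⟨h2, _⟩ | ⟨h2, _⟩ <;> rw [h2]
        · nlinarith [rpow_nonneg hε p]
        · nlinarith [rpow_nonneg hx p]

lemma bern {a ε p : ℝ} (ha : 0 < a) (hε : 0 < ε) (hεa : ε ≤ a / 2) (hp : 1 ≤ p) :
    (a - ε) ^ p + (a / 2) ^ (p - 1) * ε ≤ a ^ p := by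
  set t := a - ε with htdef
  have ht : 0 < t := by simp only [htdef]; linarith
  have ht2 : a / 2 ≤ t := by simp only [htdef]; linarith
  have key : 1 + p * (ε / t) ≤ (1 + ε / t) ^ p :=
    one_add_mul_self_le_rpow_one_add (by nlinarith [div_nonneg hε.le ht.le]) hp
  have h1 : a ^ p = t ^ p * (1 + ε / t) ^ p := by
    rw [← mul_rpow ht.le (by positivity)]
    congr 1; rw [htdef]; field_simp [show a - ε ≠ 0 by linarith]; ring
  have htp : t ^ p = t ^ (p - 1) * t := by
    rw [← Real.rpow_add_one ht.ne' (p-1)]; ring_nf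
  have h2 : t ^ p * (1 + p * (ε / t)) ≤ t ^ p * (1 + ε / t) ^ p :=
    mul_le_mul_of_nonneg_left key (rpow_nonneg ht.le p)
  have h3 : t ^ p * (1 + p * (ε / t)) = t ^ p + p * ε * t ^ (p - 1) := by
    rw [mul_add, mul_one, htp]; field_simp
  have h4 : (a / 2) ^ (p - 1) * ε ≤ p * ε * t ^ (p - 1) := by
    have h5 : (a / 2) ^ (p - 1) ≤ t ^ (p - 1) := rpow_le_rpow (by positivity) ht2 (by linarith)
    nlinarith [mul_le_mul_of_nonneg_right h5 hε.le, mul_nonneg (rpow_nonneg ht.le (p-1)) hε.le]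
  rw [h3] at h2
  rw [h1]
  linarith

lemma eps_pow_le {C ε p : ℝ} (hC : 0 < C) (hε : 0 < ε) (hp : 1 < p)
    (h : ε ≤ C ^ (p - 1)⁻¹) : ε ^ p ≤ C * ε := by
  have h1 : ε ^ p = ε ^ (p - 1) * ε := by
    rw [← Real.rpow_add_one hε.ne' (p-1)]; ring_nf
  have h2 : ε ^ (p - 1) ≤ C := by
    calc ε ^ (p-1) ≤ (C ^ (p-1)⁻¹) ^ (p-1) := rpow_le_rpow hε.le h (by linarith)
      _ = C := Real.rpow_inv_rpow hC.le (by intro hh; linarith)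
  rw [h1]; exact mul_le_mul_of_nonneg_right h2 hε.le

lemma abs_clamp {a c mm : ℝ} (h : mm ≤ c) : |c - max a mm| ≤ |c - a| := by
  rcases le_or_gt mm a with h1 | h1
  · rw [max_eq_left h1]
  · rw [max_eq_right h1.le, abs_of_nonneg (by linarith), abs_of_nonneg (by linarith)]
    linarith

lemma G_neg (k : ℕ) (lam p : ℝ) (L f v : Fin k → ℝ) :
    G k lam p L (fun i => -(f i)) (fun i => -(v i)) = G k lam p L f v := by
  unfold G
  congr 1
  · refine Finset.sum_congr rfl fun j _ => ?_
    by_cases hj : j.val = 0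
    · simp [hj]
    · simp only [hj, if_false, neg_sub_neg]
      exact abs_sub_comm _ _
  · congr 1
    refine Finset.sum_congr rfl fun j _ => ?_
    rw [neg_sub_neg, abs_sub_comm]

lemma lower_strict (k : ℕ) (hk : 1 ≤ k) (lam p : ℝ) (hlam : 0 < lam) (hp : 1 < p)
    (L f : Fin k → ℝ) (hL : ∀ i, 0 < L i)
    (hf : ∃ i j : Fin k, f i ≠ f j)
    (u : Fin k → ℝ) (hu : ∀ v : Fin k → ℝ, G k lam p L f u ≤ G k lam p L f v) :
    ∀ i : Fin k, sInf (Set.range f) < u i := by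
  classical
  haveI : Nonempty (Fin k) := ⟨⟨0, hk⟩⟩
  have hp0 : (0:ℝ) < p := lt_trans one_pos hp
  set m := sInf (Set.range f) with hmdef
  have hfin : (Set.range f).Finite := Set.finite_range f
  have hne : (Set.range f).Nonempty := Set.range_nonempty f
  have hmle : ∀ i, m ≤ f i := fun i => csInf_le hfin.bddBelow ⟨i, rfl⟩
  have hj1 : ∃ j, m < f j := by
    obtain ⟨a, b, hab⟩ := hf
    rcases lt_or_ge m (f a) with h | h
    · exact ⟨a, h⟩
    · refine ⟨b, lt_of_le_of_ne (hmle b) fun hh => hab ?_⟩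
      have : f a = m := le_antisymm h (hmle a)
      rw [this, ← hh]
  -- stage 1 : m ≤ u j for all j
  have stage1 : ∀ j, m ≤ u j := by
    by_contra h
    push_neg at h
    obtain ⟨i0, hi0⟩ := h
    set v : Fin k → ℝ := fun j => max (u j) m with hvdef
    have hlt : G k lam p L f v < G k lam p L f u := by
      unfold G
      have hTV : (∑ i : Fin k, if i.val = 0 then 0 else |v i - v (pred i)|)
          ≤ ∑ i : Fin k, if i.val = 0 then 0 else |u i - u (pred i)| := by
        refine Finset.sum_le_sum fun j _ => ?_
        by_cases hj : j.val = 0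
        · simp [hj]
        · simp only [hj, if_false, hvdef]
          exact abs_max_sub_max_le_abs _ _ _
      have hfid : (∑ i : Fin k, L i * |f i - v i| ^ p)
          < ∑ i : Fin k, L i * |f i - u i| ^ p := by
        refine Finset.sum_lt_sum (fun j _ => ?_) ⟨i0, Finset.mem_univ _, ?_⟩
        · exact mul_le_mul_of_nonneg_left
            (rpow_le_rpow (abs_nonneg _) (abs_clamp (hmle j)) hp0.le) (hL j).le
        · refine mul_lt_mul_of_pos_left ?_ (hL i0)
          refine rpow_lt_rpow (abs_nonneg _) ?_ hp0
          have hv0 : v i0 = m := max_eq_right hi0.le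
          rw [hv0, abs_of_nonneg (by linarith [hmle i0]),
            abs_of_nonneg (by linarith [hmle i0])]
          linarith
      exact add_lt_add_of_le_of_lt hTV (mul_lt_mul_of_pos_left hfid hlam)
    exact absurd (hu v) (not_le.mpr hlt)
  -- stage 2
  intro i
  by_contra hcon
  have hui : u i = m := le_antisymm (not_lt.mp hcon) (stage1 i)
  have hSL : 0 < ∑ j : Fin k, L j := Finset.sum_pos (fun j _ => hL j) Finset.univ_nonempty
  set SL := ∑ j : Fin k, L j with hSLdef
  by_cases hall : ∀ j, u j = m
  · -- u is constant equal to m : shift everything up by ε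
    obtain ⟨j1, hfj1⟩ := hj1
    set a := f j1 - m with hadef
    have ha : 0 < a := by simp only [hadef]; linarith
    set c1 := (a / 2) ^ (p - 1) with hc1def
    have hc1 : 0 < c1 := rpow_pos_of_pos (by linarith) _
    set C := L j1 * c1 / (2 * SL) with hCdef
    have hC : 0 < C := div_pos (mul_pos (hL j1) hc1) (by linarith)
    set ε := min (a / 2) (C ^ (p - 1)⁻¹) with hεdef
    have hε : 0 < ε := lt_min (by linarith) (rpow_pos_of_pos hC _)
    have hεa : ε ≤ a / 2 := min_le_left _ _
    have hεp : ε ^ p ≤ C * ε := eps_pow_le hC hε hp (min_le_right _ _)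
    set v : Fin k → ℝ := fun _ => m + ε with hvdef
    have hlt : G k lam p L f v < G k lam p L f u := by
      unfold G
      have hTV : (∑ i : Fin k, if i.val = 0 then 0 else |v i - v (pred i)|)
          = ∑ i : Fin k, if i.val = 0 then 0 else |u i - u (pred i)| := by
        refine Finset.sum_congr rfl fun j _ => ?_
        by_cases hj : j.val = 0
        · simp [hj]
        · simp [hj, hvdef, hall j, hall (pred j)]
      have hfid : (∑ i : Fin k, L i * |f i - v i| ^ p)
          < ∑ i : Fin k, L i * |f i - u i| ^ p := by
        have hbound : ∀ j : Fin k, L j * |f j - v j| ^ p ≤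
            L j * (|f j - u j| ^ p + ε ^ p)
              - (if j = j1 then L j1 * (c1 * ε + ε ^ p) else 0) := by
          intro j
          have hx : (0:ℝ) ≤ f j - m := by linarith [hmle j]
          have habs : |f j - v j| ^ p ≤ |f j - u j| ^ p + ε ^ p := by
            have h1 : f j - v j = (f j - m) - ε := by
              show f j - (m + ε) = (f j - m) - ε; ring
            have h2 : |f j - u j| = f j - m := by
              rw [hall j, abs_of_nonneg hx]
            rw [h1, h2, ← abs_of_nonneg hx]
            rw [abs_of_nonneg hx]
            exact abs_sub_eps_rpow hp0.le hx hε.le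
          by_cases hj : j = j1
          · subst hj
            simp only [eq_self_iff_true, if_true]
            have h1 : f j - v j = a - ε := by
              show f j - (m + ε) = (f j - m) - ε; ring
            have h2 : |f j - u j| = a := by rw [hall j, abs_of_nonneg (by linarith)]
            have h3 : |a - ε| = a - ε := abs_of_nonneg (by linarith)
            have h4 : (a - ε) ^ p + c1 * ε ≤ a ^ p := bern ha hε hεa hp.le
            rw [h1, h2, h3]
            have h5 : (a - ε) ^ p ≤ a ^ p - c1 * ε := by linarith
            nlinarith [mul_le_mul_of_nonneg_left h5 (hL j).le,
              mul_nonneg (hL j).le (rpow_nonneg (show (0:ℝ) ≤ ε from hε.le) p)]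
          · simp only [if_neg hj, sub_zero]
            exact mul_le_mul_of_nonneg_left habs (hL j).le
        calc (∑ i : Fin k, L i * |f i - v i| ^ p)
            ≤ ∑ i : Fin k, (L i * (|f i - u i| ^ p + ε ^ p)
                - (if i = j1 then L j1 * (c1 * ε + ε ^ p) else 0)) :=
              Finset.sum_le_sum fun j _ => hbound j
          _ = (∑ i : Fin k, L i * |f i - u i| ^ p) + SL * ε ^ p
                - L j1 * (c1 * ε + ε ^ p) := by
              rw [Finset.sum_sub_distrib, Finset.sum_ite_eq' Finset.univ j1
                (fun _ => L j1 * (c1 * ε + ε ^ p))]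
              simp [hSLdef, Finset.sum_add_distrib, ← Finset.sum_mul, mul_add]
          _ < ∑ i : Fin k, L i * |f i - u i| ^ p := by
              have h6 : SL * ε ^ p ≤ SL * (C * ε) :=
                mul_le_mul_of_nonneg_left hεp hSL.le
              have h7 : SL * (C * ε) = L j1 * c1 * ε / 2 := by
                rw [hCdef]; field_simp
              have h8 : 0 < L j1 * (c1 * ε) := mul_pos (hL j1) (mul_pos hc1 hε)
              have h9 : 0 ≤ L j1 * ε ^ p :=
                mul_nonneg (hL j1).le (rpow_nonneg hε.le p)
              have h10 : L j1 * (c1 * ε + ε ^ p) = L j1 * (c1 * ε) + L j1 * ε ^ p := by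
                ring
              have h12 : L j1 * c1 * ε = L j1 * (c1 * ε) := by ring
              linarith
      rw [hTV]
      exact add_lt_add_right (mul_lt_mul_of_pos_left hfid hlam) _
    exact absurd (hu v) (not_le.mpr hlt)
  · -- u is not constant: find a mixed edge and raise the plateau {u = m}
    push_neg at hall
    obtain ⟨jn, hjn⟩ := hall
    have hk0 : 0 < k := hk
    -- find an edge where exactly one endpoint is on the plateau
    have hedge : ∃ e : Fin k, e.val ≠ 0 ∧ ¬(u e = m ↔ u (pred e) = m) := by
      by_contra h
      push_neg at h
      have key : ∀ n (hn : n < k), (u ⟨n, hn⟩ = m ↔ u ⟨0, hk0⟩ = m) := by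
        intro n
        induction n with
        | zero => intro hn; exact Iff.rfl
        | succ n ih =>
          intro hn
          have h1 := h ⟨n + 1, hn⟩ (by simp)
          have h2 : pred (⟨n + 1, hn⟩ : Fin k) = ⟨n, Nat.lt_of_succ_lt hn⟩ := by
            simp [pred]
          rw [h2] at h1
          exact h1.trans (ih (Nat.lt_of_succ_lt hn))
      have hi' := key i.val i.isLt
      have hjn' := key jn.val jn.isLt
      simp only [Fin.eta] at hi' hjn'
      exact hjn (hjn'.mpr (hi'.mp hui))
    obtain ⟨e, he0, hemix⟩ := hedge
    -- the gap between the plateau and the rest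
    have hγex : ∀ j : Fin k, 0 < (if u j = m then (1:ℝ) else u j - m) := by
      intro j
      by_cases hj : u j = m
      · simp [hj]
      · simp only [if_neg hj]
        exact sub_pos.mpr (lt_of_le_of_ne (stage1 j) (Ne.symm hj))
    set γ := Finset.univ.inf' Finset.univ_nonempty
      (fun j : Fin k => if u j = m then (1:ℝ) else u j - m) with hγdef
    have hγpos : 0 < γ := by
      rw [hγdef, Finset.lt_inf'_iff]
      exact fun j _ => hγex j
    have hγle : ∀ j : Fin k, u j ≠ m → γ ≤ u j - m := by
      intro j hj
      have h1 := Finset.inf'_le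
        (fun j : Fin k => if u j = m then (1:ℝ) else u j - m) (Finset.mem_univ j)
      rw [if_neg hj] at h1
      exact h1
    set C := 1 / (2 * (lam * SL)) with hCdef
    have hC : 0 < C := by
      rw [hCdef]; positivity
    set ε := min γ (C ^ (p - 1)⁻¹) with hεdef
    have hε : 0 < ε := lt_min hγpos (rpow_pos_of_pos hC _)
    have hεγ : ε ≤ γ := min_le_left _ _
    have hεp : ε ^ p ≤ C * ε := eps_pow_le hC hε hp (min_le_right _ _)
    set v : Fin k → ℝ := fun j => if u j = m then m + ε else u j with hvdef
    have hvj : ∀ j, u j = m → v j = m + ε := fun j hj => by simp [hvdef, hj]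
    have hvj' : ∀ j, u j ≠ m → v j = u j := fun j hj => by simp [hvdef, hj]
    -- the mixed-edge TV term decreases by exactly ε; others do not increase
    have hTVterm : ∀ j : Fin k,
        (if j.val = 0 then 0 else |v j - v (pred j)|) ≤
        (if j.val = 0 then 0 else |u j - u (pred j)|) - (if j = e then ε else 0) := by
      intro j
      by_cases hj0 : j.val = 0
      · have hje : j ≠ e := fun hh => he0 (hh ▸ hj0)
        simp [hj0, hje]
      · simp only [hj0, if_false]
        have hgap : ∀ x y : Fin k, u x = m → u y ≠ m →
            |v x - v y| = |u x - u y| - ε := by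
          intro x y hx hy
          have hym : m < u y := lt_of_le_of_ne (stage1 y) (Ne.symm hy)
          have hyγ : γ ≤ u y - m := hγle y hy
          rw [hvj x hx, hvj' y hy, hx]
          rw [abs_of_nonpos (by linarith), abs_of_nonpos (by linarith)]
          ring
        by_cases hj : u j = m <;> by_cases hpj : u (pred j) = m
        · -- both on plateau
          have hje : j ≠ e := by
            intro hh; subst hh; exact hemix (iff_of_true hj hpj)
          rw [hvj j hj, hvj _ hpj, if_neg hje, hj, hpj]
          simp
        · have h1 := hgap j (pred j) hj hpj
          rw [h1]
          by_cases hje : j = e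
          · rw [if_pos hje]
          · rw [if_neg hje]; linarith [hε]
        · have h1 := hgap (pred j) j hpj hj
          rw [abs_sub_comm (v j), abs_sub_comm (u j), h1]
          by_cases hje : j = e
          · rw [if_pos hje]
          · rw [if_neg hje]; linarith [hε]
        · have hje : j ≠ e := by
            intro hh; subst hh; exact hemix (iff_of_false hj hpj)
          rw [hvj' j hj, hvj' _ hpj, if_neg hje]
          simp
    have hTV : (∑ j : Fin k, if j.val = 0 then 0 else |v j - v (pred j)|)
        ≤ (∑ j : Fin k, if j.val = 0 then 0 else |u j - u (pred j)|) - ε := by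
      calc (∑ j : Fin k, if j.val = 0 then 0 else |v j - v (pred j)|)
          ≤ ∑ j : Fin k, ((if j.val = 0 then 0 else |u j - u (pred j)|)
              - (if j = e then ε else 0)) := Finset.sum_le_sum fun j _ => hTVterm j
        _ = (∑ j : Fin k, if j.val = 0 then 0 else |u j - u (pred j)|) - ε := by
            rw [Finset.sum_sub_distrib, Finset.sum_ite_eq' Finset.univ e (fun _ => ε)]
            simp
    -- fidelity increases by at most SL * ε^p
    have hfidterm : ∀ j : Fin k, L j * |f j - v j| ^ p ≤
        L j * |f j - u j| ^ p + L j * ε ^ p := by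
      intro j
      by_cases hj : u j = m
      · have hx : (0:ℝ) ≤ f j - m := by linarith [hmle j]
        have h1 : f j - v j = (f j - m) - ε := by rw [hvj j hj]; ring
        have h2 : |f j - u j| = f j - m := by rw [hj, abs_of_nonneg hx]
        rw [h1, h2, ← mul_add]
        exact mul_le_mul_of_nonneg_left (abs_sub_eps_rpow hp0.le hx hε.le) (hL j).le
      · rw [hvj' j hj]
        nlinarith [mul_nonneg (hL j).le (rpow_nonneg hε.le p)]
    have hfid : (∑ j : Fin k, L j * |f j - v j| ^ p)
        ≤ (∑ j : Fin k, L j * |f j - u j| ^ p) + SL * ε ^ p := by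
      calc (∑ j : Fin k, L j * |f j - v j| ^ p)
          ≤ ∑ j : Fin k, (L j * |f j - u j| ^ p + L j * ε ^ p) :=
            Finset.sum_le_sum fun j _ => hfidterm j
        _ = (∑ j : Fin k, L j * |f j - u j| ^ p) + SL * ε ^ p := by
            rw [Finset.sum_add_distrib, ← Finset.sum_mul, hSLdef]
    have hlt : G k lam p L f v < G k lam p L f u := by
      unfold G
      have h6 : lam * SL * ε ^ p ≤ lam * SL * (C * ε) := by
        have := mul_le_mul_of_nonneg_left hεp (mul_pos hlam hSL).le
        linarith
      have h7 : lam * SL * (C * ε) = ε / 2 := by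
        rw [hCdef]; field_simp
      have h8 : lam * (∑ j : Fin k, L j * |f j - v j| ^ p)
          ≤ lam * (∑ j : Fin k, L j * |f j - u j| ^ p) + lam * SL * ε ^ p := by
        have := mul_le_mul_of_nonneg_left hfid hlam.le
        nlinarith
      nlinarith [hTV, h8, h6, h7, hε]
    exact absurd (hu v) (not_le.mpr hlt)


theorem stmt9 (k : ℕ) (hk : 1 ≤ k) (lam p : ℝ) (hlam : 0 < lam) (hp : 1 < p)
    (L f : Fin k → ℝ) (hL : ∀ i, 0 < L i)
    (hf : ∃ i j : Fin k, f i ≠ f j)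
    (u : Fin k → ℝ) (hu : ∀ v : Fin k → ℝ, G k lam p L f u ≤ G k lam p L f v) :
    (∀ i : Fin k, sInf (Set.range f) < u i ∧ u i < sSup (Set.range f)) ∧ u ≠ f := by
  haveI : Nonempty (Fin k) := ⟨⟨0, hk⟩⟩
  have hfin : (Set.range f).Finite := Set.finite_range f
  have hne : (Set.range f).Nonempty := Set.range_nonempty f
  have hlow := lower_strict k hk lam p hlam hp L f hL hf u hu
  have hu' : ∀ v : Fin k → ℝ,
      G k lam p L (fun i => -f i) (fun i => -u i) ≤ G k lam p L (fun i => -f i) v := by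
    intro v
    have h1 : G k lam p L (fun i => -f i) v = G k lam p L f (fun i => -(v i)) := by
      have h2 := G_neg k lam p L f (fun i => -(v i))
      simpa using h2
    rw [h1, G_neg k lam p L f u]
    exact hu _
  have hf' : ∃ i j : Fin k, (fun i => -f i) i ≠ (fun i => -f i) j := by
    obtain ⟨i, j, hij⟩ := hf
    exact ⟨i, j, by simpa using hij⟩
  have hupp := lower_strict k hk lam p hlam hp L (fun i => -f i) hL hf'
    (fun i => -u i) hu'
  have hsup : ∀ i : Fin k, u i < sSup (Set.range f) := by
    intro i
    have h2 := hupp i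
    have h3 : -sSup (Set.range f) ≤ sInf (Set.range fun i => -f i) := by
      apply le_csInf (Set.range_nonempty _)
      rintro b ⟨j, rfl⟩
      exact neg_le_neg (le_csSup hfin.bddAbove ⟨j, rfl⟩)
    have h4 : -sSup (Set.range f) < -u i := lt_of_le_of_lt h3 h2
    linarith
  refine ⟨fun i => ⟨hlow i, hsup i⟩, ?_⟩
  intro heq
  obtain ⟨j0, hj0⟩ := Set.Nonempty.csInf_mem hne hfin
  have := hlow j0
  rw [heq] at this
  rw [hj0] at this
  exact lt_irrefl _ this
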